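/- A series Σ aₙ of nonnegative real numbers converges if and only if there exists a sequence of positive reals bₙ with bₙ → ∞ such that Σ aₙbₙ converges. -/

import Mathlib

open Filter Topology

/-- du Bois-Reymond: no worst convergent series exists. -/
theorem no_worst_converge_iff (a : ℕ → ℝ) (ha : ∀ n, 0 ≤ a n) :
    Summable a ↔
      ∃ b : ℕ → ℝ, (∀ n, 0 < b n) ∧ Tendsto b atTop atTop ∧
        Summable (fun n => a n * b n) := by
  constructor
  · intro hs
    set r : ℕ → ℝ := fun n => ∑' k, a (k + n) with hrdef
    have hsum : ∀ n, Summable fun k => a (k + n) := fun n => (summable_nat_add_iff n).2 hs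
    have hrn : ∀ n, 0 ≤ r n := fun n => tsum_nonneg fun k => ha _
    have hrec : ∀ n, r n = a n + r (n + 1) := by
      intro n
      have h := Summable.tsum_eq_zero_add (hsum n)
      have h2 : ∀ k : ℕ, k + 1 + n = k + (n + 1) := fun k => by omega
      simpa [h2] using h
    have hanti : ∀ n, r (n + 1) ≤ r n := fun n => by
      rw [hrec n]; linarith [ha n]
    set d : ℕ → ℝ := fun n => Real.sqrt (r n) + Real.sqrt (r (n + 1)) + (1 / 2 : ℝ) ^ n
      with hddef
    have hdpos : ∀ n, 0 < d n := fun n => by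
      have := Real.sqrt_nonneg (r n)
      have := Real.sqrt_nonneg (r (n + 1))
      have : (0 : ℝ) < (1 / 2 : ℝ) ^ n := by positivity
      simp only [hddef]; positivity
    have hr0 : Tendsto r atTop (𝓝 0) := by
      simpa [hrdef] using tendsto_sum_nat_add a
    have hsq0 : Tendsto (fun n => Real.sqrt (r n)) atTop (𝓝 0) := by
      have := (Real.continuous_sqrt.tendsto 0).comp hr0
      simpa [Function.comp_def] using this
    have hsq0' : Tendsto (fun n => Real.sqrt (r (n + 1))) atTop (𝓝 0) :=
      hsq0.comp (tendsto_add_atTop_nat 1)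
    have hpow : Tendsto (fun n : ℕ => (1 / 2 : ℝ) ^ n) atTop (𝓝 0) :=
      tendsto_pow_atTop_nhds_zero_of_lt_one (by norm_num) (by norm_num)
    have hd0 : Tendsto d atTop (𝓝 0) := by
      have := (hsq0.add hsq0').add hpow
      simpa [hddef] using this
    refine ⟨fun n => (d n)⁻¹, fun n => inv_pos.2 (hdpos n), ?_, ?_⟩
    · exact Filter.Tendsto.inv_tendsto_nhdsGT_zero
        (tendsto_nhdsWithin_of_tendsto_nhds_of_eventually_within _ hd0
          (Filter.Eventually.of_forall fun n => hdpos n))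
    · have key : ∀ n, a n * (d n)⁻¹ ≤ Real.sqrt (r n) - Real.sqrt (r (n + 1)) := by
        intro n
        rw [mul_inv_le_iff₀ (hdpos n)]
        have h1 : a n = r n - r (n + 1) := by linarith [hrec n]
        have hs1 : Real.sqrt (r (n + 1)) ≤ Real.sqrt (r n) :=
          Real.sqrt_le_sqrt (hanti n)
        have hs2 : Real.sqrt (r n) + Real.sqrt (r (n + 1)) ≤ d n := by
          have : (0 : ℝ) < (1 / 2 : ℝ) ^ n := by positivity
          simp only [hddef]; linarith
        calc a n = (Real.sqrt (r n) - Real.sqrt (r (n + 1))) *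
              (Real.sqrt (r n) + Real.sqrt (r (n + 1))) := by
              rw [h1]
              have e1 := Real.mul_self_sqrt (hrn n)
              have e2 := Real.mul_self_sqrt (hrn (n + 1))
              nlinarith [e1, e2]
          _ ≤ (Real.sqrt (r n) - Real.sqrt (r (n + 1))) * d n :=
              mul_le_mul_of_nonneg_left hs2 (by linarith)
      have htel : Summable (fun n => Real.sqrt (r n) - Real.sqrt (r (n + 1))) := by
        apply summable_of_sum_range_le
          (c := Real.sqrt (r 0))
          (fun n => by
            have := Real.sqrt_le_sqrt (hanti n)
            linarith)
        intro n
        rw [Finset.sum_range_sub' (fun i => Real.sqrt (r i))]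
        have := Real.sqrt_nonneg (r n)
        linarith
      exact htel.of_nonneg_of_le
        (fun n => mul_nonneg (ha n) (inv_pos.2 (hdpos n)).le) key
  · rintro ⟨b, hbpos, hbt, hsb⟩
    obtain ⟨N, hN⟩ := (hbt.eventually_ge_atTop 1).exists_forall_of_atTop
    have h1 : Summable fun n => a (n + N) * b (n + N) :=
      (summable_nat_add_iff N).2 hsb
    have h2 : Summable fun n => a (n + N) := by
      refine h1.of_nonneg_of_le (fun n => ha _) fun n => ?_
      have hb1 : 1 ≤ b (n + N) := hN _ (Nat.le_add_left N n)
      nlinarith [ha (n + N)]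
    exact (summable_nat_add_iff N).1 h2
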